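/- If N is a power bounded normal operator on a Hilbert space, then N is a contraction, N decomposes as the orthogonal sum of a unitary operator and a C_{00} normal contraction, and its asymptotic limit A_N is the orthogonal projection onto H₀(N)^⊥; in particular A_N = A_{N*}. -/

import Mathlib

open ContinuousLinearMap Filter Topology

section Aux

variable {H : Type*} [NormedAddCommGroup H] [InnerProductSpace ℂ H] [CompleteSpace H]

local notation "⟪" x ", " y "⟫" => @inner ℂ _ _ x y

/-- Pointwise norm equality for a normal operator. -/
theorem stmt15_normalNormEq (T : H →L[ℂ] H) (h : adjoint T ∘L T = T ∘L adjoint T) (x : H) :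
    ‖adjoint T x‖ = ‖T x‖ := by
  have h1 : ⟪adjoint T (T x), x⟫ = ⟪T x, T x⟫ := adjoint_inner_left T x (T x)
  have h2 := adjoint_inner_left (adjoint T) x (adjoint T x)
  rw [adjoint_adjoint] at h2
  have h3 : T (adjoint T x) = adjoint T (T x) := by
    have := congrArg (fun f : H →L[ℂ] H => f x) h
    simpa using this.symm
  have key : ⟪T x, T x⟫ = ⟪adjoint T x, adjoint T x⟫ := by rw [← h1, ← h2, h3]
  have := congrArg (RCLike.re (K := ℂ)) key
  rw [inner_self_eq_norm_sq, inner_self_eq_norm_sq] at this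
  exact (sq_eq_sq₀ (norm_nonneg _) (norm_nonneg _) |>.mp this.symm)

theorem stmt15_normalSqNorm (T : H →L[ℂ] H) (h : Commute (star T) T) : ‖T ^ 2‖ = ‖T‖ ^ 2 := by
  have h1 : star (T ^ 2) * T ^ 2 = (star T * T) ^ 2 := by
    rw [star_pow]; exact (h.mul_pow 2).symm
  have hsa : IsSelfAdjoint (star T * T) := IsSelfAdjoint.star_mul_self T
  have h2 : ‖(star T * T) ^ 2‖ = ‖star T * T‖ ^ 2 := by
    nth_rw 1 [sq]
    nth_rw 1 [← hsa.star_eq]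
    rw [CStarRing.norm_star_mul_self]; ring
  have h3 : ‖star (T ^ 2) * T ^ 2‖ = ‖T ^ 2‖ ^ 2 := by
    rw [CStarRing.norm_star_mul_self]; ring
  have h4 : ‖star T * T‖ = ‖T‖ ^ 2 := by rw [CStarRing.norm_star_mul_self]; ring
  have : ‖T ^ 2‖ ^ 2 = (‖T‖ ^ 2) ^ 2 := by rw [← h3, h1, h2, h4]
  exact sq_eq_sq₀ (norm_nonneg _) (by positivity) |>.mp this

theorem stmt15_normalPow2Norm (T : H →L[ℂ] H) (h : Commute (star T) T) (k : ℕ) :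
    ‖T ^ (2 ^ k)‖ = ‖T‖ ^ (2 ^ k) := by
  induction k with
  | zero => simp
  | succ k ih =>
    have hc : Commute (star (T ^ (2 ^ k))) (T ^ (2 ^ k)) := by
      rw [star_pow]; exact h.pow_pow _ _
    have h2 := stmt15_normalSqNorm (T ^ (2 ^ k)) hc
    rw [← pow_mul, ← pow_succ, ih] at h2
    rw [h2, ← pow_mul, ← pow_succ]

theorem stmt15_normLeOne (N : H →L[ℂ] H) (hnormal : adjoint N ∘L N = N ∘L adjoint N)
    (hpb : ∃ C : ℝ, ∀ n : ℕ, ‖N ^ n‖ ≤ C) : ‖N‖ ≤ 1 := by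
  by_contra hlt
  push_neg at hlt
  obtain ⟨C, hC⟩ := hpb
  have hc : Commute (star N) N := by
    rw [star_eq_adjoint]
    show adjoint N * N = N * adjoint N
    exact hnormal
  obtain ⟨m, hm⟩ := (tendsto_pow_atTop_atTop_of_one_lt hlt).eventually_gt_atTop C |>.exists
  have h1 : ‖N ^ (2 ^ m)‖ = ‖N‖ ^ (2 ^ m) := stmt15_normalPow2Norm N hc m
  have h2 : ‖N‖ ^ m ≤ ‖N‖ ^ (2 ^ m) :=
    pow_le_pow_right₀ (le_of_lt hlt) (m.lt_two_pow_self).le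
  linarith [hC (2 ^ m)]

theorem stmt15_defectReLem (N : H →L[ℂ] H) (w : H) :
    RCLike.re ⟪(1 - adjoint N * N) w, w⟫ = ‖w‖ ^ 2 - ‖N w‖ ^ 2 := by
  have h0 : (1 - adjoint N * N) w = w - adjoint N (N w) := rfl
  rw [h0, inner_sub_left, map_sub, adjoint_inner_left, inner_self_eq_norm_sq,
    inner_self_eq_norm_sq]

theorem stmt15_defectSA (N : H →L[ℂ] H) : IsSelfAdjoint (1 - adjoint N * N : H →L[ℂ] H) := by
  have : IsSelfAdjoint (adjoint N * N) := by
    rw [← star_eq_adjoint]; exact IsSelfAdjoint.star_mul_self N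
  exact (IsSelfAdjoint.one (R := H →L[ℂ] H)).sub this

theorem stmt15_keyIneq (N : H →L[ℂ] H) (hN : ‖N‖ ≤ 1) (v : H) :
    ‖(1 - adjoint N * N) v‖ ^ 2 ≤
      ‖(1 - adjoint N * N : H →L[ℂ] H)‖ * (‖v‖ ^ 2 - ‖N v‖ ^ 2) := by
  set D : H →L[ℂ] H := 1 - adjoint N * N with hD
  have hcontr : ∀ w : H, ‖N w‖ ≤ ‖w‖ := fun w =>
    (N.le_opNorm w).trans (by nlinarith [norm_nonneg w, N.le_opNorm w])
  have hposw : ∀ w : H, 0 ≤ ‖w‖ ^ 2 - ‖N w‖ ^ 2 := fun w => by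
    nlinarith [hcontr w, norm_nonneg (N w), norm_nonneg w]
  rcases eq_or_lt_of_le (norm_nonneg D) with h0 | hpos
  · have : D = 0 := by rw [← norm_eq_zero]; exact h0.symm
    rw [this]; simp [hposw v]
  set t : ℝ := ‖D‖⁻¹ with ht
  have htpos : 0 < t := inv_pos.mpr hpos
  set w : H := v - (t : ℂ) • D v with hw
  have hDw : D w = D v - (t : ℂ) • D (D v) := by rw [hw]; simp
  have hsa : adjoint D = D := (stmt15_defectSA N).adjoint_eq
  have e1 : ⟪D (D v), v⟫ = ⟪D v, D v⟫ := by
    nth_rw 1 [← hsa]; exact adjoint_inner_left D v (D v)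
  have expand : ⟪D w, w⟫ = ⟪D v, v⟫ - (t:ℂ) * ⟪D v, D v⟫ - (t:ℂ) * ⟪D (D v), v⟫
      + (t:ℂ) * ((t:ℂ) * ⟪D (D v), D v⟫) := by
    rw [hDw, hw, inner_sub_left, inner_sub_right, inner_sub_right,
      inner_smul_left, inner_smul_right, inner_smul_left, inner_smul_right]
    simp [Complex.conj_ofReal]
    ring
  have hnormDv : (⟪D v, D v⟫ : ℂ).re = ‖D v‖ ^ 2 :=
    RCLike.re_to_complex ▸ inner_self_eq_norm_sq (D v)
  have hre : RCLike.re ⟪D w, w⟫ = RCLike.re ⟪D v, v⟫ - 2 * t * ‖D v‖ ^ 2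
      + t ^ 2 * RCLike.re ⟪D (D v), D v⟫ := by
    rw [expand, e1]
    simp only [map_sub, map_add, RCLike.re_to_complex, Complex.re_ofReal_mul, hnormDv]
    ring
  have hb1 : RCLike.re ⟪D (D v), D v⟫ ≤ ‖D‖ * ‖D v‖ ^ 2 := by
    calc RCLike.re ⟪D (D v), D v⟫ ≤ ‖D (D v)‖ * ‖D v‖ := re_inner_le_norm _ _
    _ ≤ (‖D‖ * ‖D v‖) * ‖D v‖ := by
        apply mul_le_mul_of_nonneg_right (D.le_opNorm (D v)) (norm_nonneg _)
    _ = ‖D‖ * ‖D v‖ ^ 2 := by ring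
  have h1 : 0 ≤ RCLike.re ⟪D w, w⟫ := by rw [hD, stmt15_defectReLem]; exact hposw w
  have h2 : RCLike.re ⟪D v, v⟫ = ‖v‖ ^ 2 - ‖N v‖ ^ 2 := by rw [hD, stmt15_defectReLem]
  have htD : t * ‖D‖ = 1 := inv_mul_cancel₀ (ne_of_gt hpos)
  have e2 : t ^ 2 * (‖D‖ * ‖D v‖ ^ 2) = t * ‖D v‖ ^ 2 := by
    calc t ^ 2 * (‖D‖ * ‖D v‖ ^ 2) = (t * ‖D‖) * (t * ‖D v‖ ^ 2) := by ring
    _ = t * ‖D v‖ ^ 2 := by rw [htD, one_mul]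
  have step : 0 ≤ (‖v‖ ^ 2 - ‖N v‖ ^ 2) - t * ‖D v‖ ^ 2 := by
    nlinarith [mul_le_mul_of_nonneg_left hb1 (sq_nonneg t)]
  have final := mul_le_mul_of_nonneg_left (by linarith : t * ‖D v‖ ^ 2 ≤ ‖v‖ ^ 2 - ‖N v‖ ^ 2)
    (le_of_lt hpos)
  calc ‖D v‖ ^ 2 = ‖D‖ * (t * ‖D v‖ ^ 2) := by
        rw [← mul_assoc, mul_comm ‖D‖ t, htD, one_mul]
  _ ≤ ‖D‖ * (‖v‖ ^ 2 - ‖N v‖ ^ 2) := final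

theorem stmt15_tendsto_of_sq {g : ℕ → ℝ} (h0 : ∀ n, 0 ≤ g n)
    (h : Tendsto (fun n => g n ^ 2) atTop (𝓝 0)) : Tendsto g atTop (𝓝 0) := by
  have h1 := h.sqrt
  rw [Real.sqrt_zero] at h1
  have : (fun n => Real.sqrt (g n ^ 2)) = g := by
    funext n; exact Real.sqrt_sq (h0 n)
  rwa [this] at h1

theorem stmt15_fix_aux {H : Type*} [NormedAddCommGroup H] [InnerProductSpace ℂ H]
    (u y : H) (h1 : ‖u‖ ≤ ‖y‖) (h2 : RCLike.re (inner ℂ u y) = ‖y‖ ^ 2) : u = y := by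
  have h3 := norm_sub_sq (𝕜 := ℂ) u y
  rw [h2] at h3
  have hA2 : ‖u‖ ^ 2 ≤ ‖y‖ ^ 2 := by nlinarith [norm_nonneg u]
  have h4 : ‖u - y‖ ^ 2 = 0 := le_antisymm (by linarith) (sq_nonneg _)
  have h5 : ‖u - y‖ = 0 := by nlinarith [norm_nonneg (u - y)]
  rw [norm_eq_zero, sub_eq_zero] at h5
  exact h5

end Aux

set_option maxHeartbeats 2000000 in
/-- A power bounded normal operator `N` is a contraction; it decomposes as the orthogonal
sum of a unitary operator (on `H₀(N)ᗮ`) and a `C₀₀` normal contraction (on the stable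
subspace `H₀(N)`); and its asymptotic limit `A_N` is the orthogonal projection onto
`H₀(N)ᗮ`; in particular `A_N = A_{N*}`. -/
theorem stmt15 {H : Type*} [NormedAddCommGroup H] [InnerProductSpace ℂ H] [CompleteSpace H]
    (N : H →L[ℂ] H) (hnormal : adjoint N ∘L N = N ∘L adjoint N)
    (hpb : ∃ C : ℝ, ∀ n : ℕ, ‖N ^ n‖ ≤ C) :
    ‖N‖ ≤ 1 ∧
    ∃ M : Submodule ℂ H,
      (M : Set H) = {x : H | Tendsto (fun n : ℕ => ‖(N ^ n) x‖) atTop (𝓝 0)} ∧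
      IsClosed (M : Set H) ∧
      -- `M` and `Mᗮ` reduce `N`
      (∀ x ∈ M, N x ∈ M ∧ adjoint N x ∈ M) ∧
      (∀ y ∈ Mᗮ, N y ∈ Mᗮ ∧ adjoint N y ∈ Mᗮ) ∧
      -- `N` restricted to `Mᗮ` is unitary
      (∀ y ∈ Mᗮ, ‖N y‖ = ‖y‖) ∧
      (∀ y ∈ Mᗮ, ∃ z ∈ Mᗮ, N z = y) ∧
      -- `N` restricted to `M` is of class `C₀₀`
      (∀ x ∈ M, Tendsto (fun n : ℕ => ‖(N ^ n) x‖) atTop (𝓝 0) ∧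
        Tendsto (fun n : ℕ => ‖((adjoint N) ^ n) x‖) atTop (𝓝 0)) ∧
      -- the asymptotic limits of `N` and `N*` are the orthogonal projection onto `Mᗮ`
      ∃ P : H →L[ℂ] H, IsSelfAdjoint P ∧ P ∘L P = P ∧
        (∀ x : H, P x ∈ Mᗮ) ∧ (∀ y ∈ Mᗮ, P y = y) ∧
        (∀ x : H, Tendsto (fun n : ℕ => (adjoint (N ^ n) ∘L N ^ n) x) atTop (𝓝 (P x))) ∧
        (∀ x : H, Tendsto (fun n : ℕ =>
          (adjoint ((adjoint N) ^ n) ∘L (adjoint N) ^ n) x) atTop (𝓝 (P x))) := by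
  have hle : ‖N‖ ≤ 1 := stmt15_normLeOne N hnormal hpb
  have hc : Commute (adjoint N) N := hnormal
  have hcontr : ∀ w : H, ‖N w‖ ≤ ‖w‖ := fun w =>
    (N.le_opNorm w).trans (by nlinarith [norm_nonneg w])
  have hpt : ∀ x : H, ‖adjoint N x‖ = ‖N x‖ := stmt15_normalNormEq N hnormal
  have hcontr' : ∀ w : H, ‖adjoint N w‖ ≤ ‖w‖ := fun w => le_of_eq_of_le (hpt w) (hcontr w)
  have hadj_pow : ∀ n : ℕ, adjoint (N ^ n) = (adjoint N) ^ n := fun n => by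
    rw [← star_eq_adjoint, ← star_eq_adjoint, star_pow]
  have hnormaln : ∀ n : ℕ, adjoint (N ^ n) ∘L (N ^ n) = (N ^ n) ∘L adjoint (N ^ n) := by
    intro n
    have : Commute (adjoint (N ^ n)) (N ^ n) := by
      rw [hadj_pow]; exact hc.pow_pow n n
    exact this
  have hptn : ∀ (n : ℕ) (x : H), ‖((adjoint N) ^ n) x‖ = ‖(N ^ n) x‖ := fun n x => by
    rw [← hadj_pow]; exact stmt15_normalNormEq (N ^ n) (hnormaln n) x
  have hpowle : ∀ k : ℕ, ‖N ^ k‖ ≤ 1 := by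
    intro k
    rcases Nat.eq_zero_or_pos k with hk | hk
    · subst hk; rw [pow_zero]
      exact ContinuousLinearMap.norm_id_le
    · exact (norm_pow_le' N hk).trans (pow_le_one₀ (norm_nonneg N) hle)
  have hpow_contr : ∀ (k : ℕ) (w : H), ‖(N ^ k) w‖ ≤ ‖w‖ := fun k w =>
    ((N ^ k).le_opNorm w).trans (by nlinarith [norm_nonneg w, hpowle k])
  have hanti : ∀ x : H, Antitone fun n : ℕ => ‖(N ^ n) x‖ := by
    intro x
    apply antitone_nat_of_succ_le
    intro n
    have : (N ^ (n + 1)) x = N ((N ^ n) x) := by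
      rw [pow_succ']; rfl
    rw [this]
    exact hcontr _
  -- the stable subspace
  set S : Set H := {x : H | Tendsto (fun n : ℕ => ‖(N ^ n) x‖) atTop (𝓝 0)} with hS
  have hzero : (0 : H) ∈ S := by
    simp only [hS, Set.mem_setOf_eq, map_zero, norm_zero]
    exact tendsto_const_nhds
  set M : Submodule ℂ H :=
    { carrier := S
      add_mem' := by
        intro a b ha hb
        simp only [hS, Set.mem_setOf_eq] at *
        apply squeeze_zero (g := fun n => ‖(N ^ n) a‖ + ‖(N ^ n) b‖)
          (fun n => norm_nonneg _)
          (fun n => by rw [map_add]; exact norm_add_le _ _)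
          (by simpa using ha.add hb)
      zero_mem' := hzero
      smul_mem' := by
        intro c x hx
        simp only [hS, Set.mem_setOf_eq] at *
        have : (fun n : ℕ => ‖(N ^ n) (c • x)‖) = fun n => ‖c‖ * ‖(N ^ n) x‖ := by
          funext n; rw [map_smul, norm_smul]
        rw [this]
        simpa using hx.const_mul ‖c‖ } with hM
  have hmem : ∀ x : H, x ∈ M ↔ Tendsto (fun n : ℕ => ‖(N ^ n) x‖) atTop (𝓝 0) := fun x =>
    Iff.rfl
  -- closedness
  have hclosed : IsClosed (M : Set H) := by
    apply isClosed_of_closure_subset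
    intro x hx
    rw [SetLike.mem_coe, hmem, Metric.tendsto_atTop]
    intro ε hε
    obtain ⟨y, hyM, hxy⟩ := Metric.mem_closure_iff.mp hx (ε / 2) (by linarith)
    rw [SetLike.mem_coe, hmem, Metric.tendsto_atTop] at hyM
    obtain ⟨K, hK⟩ := hyM (ε / 2) (by linarith)
    refine ⟨K, fun n hn => ?_⟩
    have h1 : ‖(N ^ n) x‖ ≤ ‖(N ^ n) (x - y)‖ + ‖(N ^ n) y‖ := by
      calc ‖(N ^ n) x‖ = ‖(N ^ n) (x - y) + (N ^ n) y‖ := by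
            rw [← map_add, sub_add_cancel]
      _ ≤ _ := norm_add_le _ _
    have h2 : ‖(N ^ n) (x - y)‖ ≤ ‖x - y‖ := hpow_contr n _
    have h3 := hK n hn
    rw [Real.dist_eq, sub_zero, abs_of_nonneg (norm_nonneg _)] at h3
    rw [Real.dist_eq, sub_zero, abs_of_nonneg (norm_nonneg _)]
    have : ‖x - y‖ < ε / 2 := by rw [← dist_eq_norm]; exact hxy
    linarith
  -- invariance of M
  have hNM : ∀ x ∈ M, N x ∈ M := by
    intro x hx
    rw [hmem] at *
    have he : (fun n : ℕ => ‖(N ^ n) (N x)‖) = fun n : ℕ => ‖(N ^ (n + 1)) x‖ := by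
      funext n; rw [pow_succ]; rfl
    rw [he]
    exact hx.comp (tendsto_add_atTop_nat 1)
  have hN'M : ∀ x ∈ M, adjoint N x ∈ M := by
    intro x hx
    rw [hmem] at *
    apply squeeze_zero (fun n => norm_nonneg _) (g := fun n => ‖(N ^ n) x‖) _ hx
    intro n
    have hcn : (N ^ n) (adjoint N x) = adjoint N ((N ^ n) x) := by
      have : Commute (N ^ n) (adjoint N) := (hc.symm.pow_left n)
      exact congrArg (fun f : H →L[ℂ] H => f x) this
    rw [hcn]
    exact hcontr' _
  -- invariance of Mᗮ
  have hNMp : ∀ y ∈ Mᗮ, N y ∈ Mᗮ := by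
    intro y hy
    rw [Submodule.mem_orthogonal] at *
    intro u hu
    rw [← adjoint_inner_left]
    exact hy _ (hN'M u hu)
  have hN'Mp : ∀ y ∈ Mᗮ, adjoint N y ∈ Mᗮ := by
    intro y hy
    rw [Submodule.mem_orthogonal] at *
    intro u hu
    rw [adjoint_inner_right]
    exact hy _ (hNM u hu)
  -- the defect operator maps into M
  have hDmem : ∀ x : H, (1 - adjoint N * N) x ∈ M := by
    intro x
    set D : H →L[ℂ] H := 1 - adjoint N * N with hD
    have hDcomm : ∀ n : ℕ, (N ^ n) (D x) = D ((N ^ n) x) := by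
      intro n
      have : Commute (N ^ n) D :=
        (Commute.one_right _).sub_right ((hc.symm.pow_left n).mul_right
          ((Commute.refl N).pow_left n))
      exact congrArg (fun f : H →L[ℂ] H => f x) this
    rw [hmem]
    -- the limit of the norms
    have hbdd : BddBelow (Set.range fun n : ℕ => ‖(N ^ n) x‖) :=
      ⟨0, by rintro r ⟨n, rfl⟩; exact norm_nonneg _⟩
    have hconv : Tendsto (fun n : ℕ => ‖(N ^ n) x‖) atTop
        (𝓝 (⨅ n : ℕ, ‖(N ^ n) x‖)) := tendsto_atTop_ciInf (hanti x) hbdd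
    set L : ℝ := ⨅ n : ℕ, ‖(N ^ n) x‖ with hL
    have hconv1 : Tendsto (fun n : ℕ => ‖(N ^ (n + 1)) x‖) atTop (𝓝 L) :=
      hconv.comp (tendsto_add_atTop_nat 1)
    have hbound : Tendsto (fun n : ℕ => ‖D‖ * (‖(N ^ n) x‖ ^ 2 - ‖(N ^ (n + 1)) x‖ ^ 2))
        atTop (𝓝 0) := by
      have := (((hconv.pow 2)).sub ((hconv1.pow 2))).const_mul ‖D‖
      simpa using this
    apply stmt15_tendsto_of_sq (fun n => norm_nonneg _)
    apply squeeze_zero (fun n => sq_nonneg _) _ hbound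
    intro n
    rw [hDcomm n]
    have := stmt15_keyIneq N hle ((N ^ n) x)
    rw [← hD] at this
    have heq : N ((N ^ n) x) = (N ^ (n + 1)) x := by rw [pow_succ']; rfl
    rw [heq] at this
    exact this
  -- isometry on Mᗮ
  have hiso : ∀ y ∈ Mᗮ, ‖N y‖ = ‖y‖ := by
    intro y hy
    have hDy : (1 - adjoint N * N) y ∈ M := hDmem y
    have hz : (inner ℂ ((1 - adjoint N * N) y) y) = 0 :=
      (Submodule.mem_orthogonal M y).mp hy _ hDy
    have hre := stmt15_defectReLem N y
    rw [hz] at hre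
    simp only [map_zero] at hre
    have : ‖y‖ ^ 2 = ‖N y‖ ^ 2 := by linarith
    exact (sq_eq_sq₀ (norm_nonneg _) (norm_nonneg _) |>.mp this.symm)
  have hiso' : ∀ y ∈ Mᗮ, ‖adjoint N y‖ = ‖y‖ := fun y hy => (hpt y).trans (hiso y hy)
  -- fixed point identities
  have hfix : ∀ y ∈ Mᗮ, adjoint N (N y) = y := by
    intro y hy
    have h1 : ‖adjoint N (N y)‖ ≤ ‖y‖ := (hcontr' (N y)).trans_eq (hiso y hy)
    have h2 : RCLike.re (inner ℂ (adjoint N (N y)) y) = ‖y‖ ^ 2 := by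
      rw [adjoint_inner_left, inner_self_eq_norm_sq, hiso y hy]
    exact stmt15_fix_aux _ _ h1 h2
  have hfix' : ∀ y ∈ Mᗮ, N (adjoint N y) = y := by
    intro y hy
    have h1 : ‖N (adjoint N y)‖ ≤ ‖y‖ := (hcontr (adjoint N y)).trans_eq (hiso' y hy)
    have h2 : RCLike.re (inner ℂ (N (adjoint N y)) y) = ‖y‖ ^ 2 := by
      have : inner ℂ (N (adjoint N y)) y = inner ℂ (adjoint N y) (adjoint N y) := by
        have h := adjoint_inner_left (adjoint N) y (adjoint N y)
        rwa [adjoint_adjoint] at h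
      rw [this, inner_self_eq_norm_sq, hiso' y hy]
    exact stmt15_fix_aux _ _ h1 h2
  -- powers preserve Mᗮ
  have hpowMp : ∀ (n : ℕ), ∀ y ∈ Mᗮ, (N ^ n) y ∈ Mᗮ := by
    intro n
    induction n with
    | zero => intro y hy; simpa using hy
    | succ n ih =>
      intro y hy
      have : (N ^ (n + 1)) y = N ((N ^ n) y) := by rw [pow_succ']; rfl
      rw [this]
      exact hNMp _ (ih y hy)
  have hpowMp' : ∀ (n : ℕ), ∀ y ∈ Mᗮ, ((adjoint N) ^ n) y ∈ Mᗮ := by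
    intro n
    induction n with
    | zero => intro y hy; simpa using hy
    | succ n ih =>
      intro y hy
      have : ((adjoint N) ^ (n + 1)) y = adjoint N (((adjoint N) ^ n) y) := by
        rw [pow_succ']; rfl
      rw [this]
      exact hN'Mp _ (ih y hy)
  -- iterated fixed point identities
  have hfixn : ∀ (n : ℕ), ∀ y ∈ Mᗮ, ((adjoint N) ^ n) ((N ^ n) y) = y := by
    intro n
    induction n with
    | zero => intro y _; simp
    | succ n ih =>
      intro y hy
      have e1 : (N ^ (n + 1)) y = N ((N ^ n) y) := by rw [pow_succ']; rfl
      have e2 : ∀ z : H, ((adjoint N) ^ (n + 1)) z = ((adjoint N) ^ n) (adjoint N z) := by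
        intro z; rw [pow_succ]; rfl
      rw [e1, e2, hfix _ (hpowMp n y hy)]
      exact ih y hy
  have hfixn' : ∀ (n : ℕ), ∀ y ∈ Mᗮ, (N ^ n) (((adjoint N) ^ n) y) = y := by
    intro n
    induction n with
    | zero => intro y _; simp
    | succ n ih =>
      intro y hy
      have e1 : ((adjoint N) ^ (n + 1)) y = adjoint N (((adjoint N) ^ n) y) := by
        rw [pow_succ']; rfl
      have e2 : ∀ z : H, (N ^ (n + 1)) z = (N ^ n) (N z) := by
        intro z; rw [pow_succ]; rfl
      rw [e1, e2, hfix' _ (hpowMp' n y hy)]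
      exact ih y hy
  -- the projection
  haveI : CompleteSpace M := hclosed.completeSpace_coe
  have horth : Mᗮᗮ = M := Submodule.orthogonal_orthogonal M
  set P : H →L[ℂ] H := (Mᗮ).subtypeL ∘L Mᗮ.orthogonalProjectionOnto with hP
  have hPmem : ∀ x : H, P x ∈ Mᗮ := fun x => (Mᗮ.orthogonalProjectionOnto x).2
  have hPfix : ∀ y ∈ Mᗮ, P y = y := by
    intro y hy
    show ((Mᗮ.orthogonalProjectionOnto y : Mᗮ) : H) = y
    exact Submodule.starProjection_eq_self_iff.mpr hy
  have hMsub : ∀ x : H, x - P x ∈ M := by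
    intro x
    have := Submodule.sub_starProjection_mem_orthogonal (K := Mᗮ) x
    rwa [horth] at this
  -- main convergence
  have hconv1 : ∀ x : H,
      Tendsto (fun n : ℕ => (adjoint (N ^ n) ∘L N ^ n) x) atTop (𝓝 (P x)) := by
    intro x
    rw [tendsto_iff_norm_sub_tendsto_zero]
    have hm : x - P x ∈ M := hMsub x
    have hmT : Tendsto (fun n : ℕ => ‖(N ^ n) (x - P x)‖) atTop (𝓝 0) := (hmem _).mp hm
    apply squeeze_zero (fun n => norm_nonneg _) _ hmT
    intro n
    have hsplit : (adjoint (N ^ n) ∘L N ^ n) x - P x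
        = ((adjoint N) ^ n) ((N ^ n) (x - P x)) := by
      have e0 : (adjoint (N ^ n) ∘L N ^ n) x = ((adjoint N) ^ n) ((N ^ n) x) := by
        rw [hadj_pow]; rfl
      have e1 : (N ^ n) x = (N ^ n) (x - P x) + (N ^ n) (P x) := by
        rw [← map_add, sub_add_cancel]
      have e2 : ((adjoint N) ^ n) ((N ^ n) (P x)) = P x := hfixn n _ (hPmem x)
      rw [e0, e1, map_add, e2]
      abel
    rw [hsplit, hptn n]
    exact hpow_contr n _
  have hconv2 : ∀ x : H,
      Tendsto (fun n : ℕ => (adjoint ((adjoint N) ^ n) ∘L (adjoint N) ^ n) x) atTop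
        (𝓝 (P x)) := by
    intro x
    rw [tendsto_iff_norm_sub_tendsto_zero]
    have hm : x - P x ∈ M := hMsub x
    have hmT : Tendsto (fun n : ℕ => ‖(N ^ n) (x - P x)‖) atTop (𝓝 0) := (hmem _).mp hm
    apply squeeze_zero (fun n => norm_nonneg _) _ hmT
    intro n
    have hadj2 : adjoint ((adjoint N) ^ n) = N ^ n := by
      rw [← hadj_pow, adjoint_adjoint]
    have hsplit : (adjoint ((adjoint N) ^ n) ∘L (adjoint N) ^ n) x - P x
        = (N ^ n) (((adjoint N) ^ n) (x - P x)) := by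
      have e0 : (adjoint ((adjoint N) ^ n) ∘L (adjoint N) ^ n) x
          = (N ^ n) (((adjoint N) ^ n) x) := by rw [hadj2]; rfl
      have e1 : ((adjoint N) ^ n) x = ((adjoint N) ^ n) (x - P x)
          + ((adjoint N) ^ n) (P x) := by rw [← map_add, sub_add_cancel]
      have e2 : (N ^ n) (((adjoint N) ^ n) (P x)) = P x := hfixn' n _ (hPmem x)
      rw [e0, e1, map_add, e2]
      abel
    rw [hsplit]
    calc ‖(N ^ n) (((adjoint N) ^ n) (x - P x))‖ ≤ ‖((adjoint N) ^ n) (x - P x)‖ :=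
        hpow_contr n _
    _ = ‖(N ^ n) (x - P x)‖ := hptn n _
  refine ⟨hle, M, rfl, hclosed, fun x hx => ⟨hNM x hx, hN'M x hx⟩,
    fun y hy => ⟨hNMp y hy, hN'Mp y hy⟩, hiso, ?_, ?_, P,
    isSelfAdjoint_starProjection Mᗮ, ?_, hPmem, hPfix, hconv1, hconv2⟩
  · -- surjectivity on Mᗮ
    intro y hy
    exact ⟨adjoint N y, hN'Mp y hy, hfix' y hy⟩
  · -- C₀₀
    intro x hx
    refine ⟨(hmem x).mp hx, ?_⟩
    have : (fun n : ℕ => ‖((adjoint N) ^ n) x‖) = fun n : ℕ => ‖(N ^ n) x‖ := by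
      funext n; exact hptn n x
    rw [this]
    exact (hmem x).mp hx
  · -- idempotence
    ext x
    show P (P x) = P x
    have := hPfix (P x) (hPmem x)
    exact this
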